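/- Let h : [0,∞) × ℝⁿ → ℝⁿ be continuous with, for each i ∈ {1,…,n} and each x ∈ ℝⁿ, the function t ↦ |hᵢ(t, x) − xᵢ| nonincreasing in t and tending to 0 as t → ∞. Let f : ℝⁿ → ℝⁿ be Lipschitz continuous. Then for every compact set K ⊆ ℝⁿ, sup_{x ∈ K} ‖f(h(t, x)) − f(x)‖ → 0 as t → ∞. Consequently, the time-varying masked system ẋ = f(h(t, x)) is asymptotically autonomous with the original system ẋ = f(x) as limit system. -/

import Mathlib

open Set Filter Topology

/-- **Proposition 2 (the masked system is asymptotically autonomous).**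
If `h : [0,∞) × ℝⁿ → ℝⁿ` is a continuous vanishing mask (for each component `i`
and each `x`, `t ↦ |hᵢ(t,x) − xᵢ|` is nonincreasing on `[0,∞)` and `hᵢ(t,x) → xᵢ`
as `t → ∞`) and `f : ℝⁿ → ℝⁿ` is Lipschitz continuous, then
`sup_{x ∈ K} ‖f(h(t,x)) − f(x)‖ → 0` as `t → ∞` for every compact `K ⊆ ℝⁿ`;
i.e. the masked system `ẋ = f(h(t,x))` is asymptotically autonomous with the
original system `ẋ = f(x)` as limit system. -/
theorem masked_system_asymptotically_autonomous
    (n : ℕ) (h : ℝ → (Fin n → ℝ) → (Fin n → ℝ)) (f : (Fin n → ℝ) → (Fin n → ℝ))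
    (hh_cont : ContinuousOn (fun p : ℝ × (Fin n → ℝ) => h p.1 p.2)
      (Set.Ici (0 : ℝ) ×ˢ Set.univ))
    (hh_mono : ∀ (i : Fin n) (x : Fin n → ℝ),
      AntitoneOn (fun t => |h t x i - x i|) (Set.Ici (0 : ℝ)))
    (hh_vanish : ∀ (i : Fin n) (x : Fin n → ℝ),
      Filter.Tendsto (fun t => h t x i) Filter.atTop (nhds (x i)))
    (hf_lip : ∃ C : NNReal, LipschitzWith C f) :
    ∀ K : Set (Fin n → ℝ), IsCompact K →
      TendstoUniformlyOn (fun t x => f (h t x)) f Filter.atTop K := by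
  intro K hK
  obtain ⟨C, hC⟩ := hf_lip
  -- First prove h(t,·) → id uniformly on K
  have key : TendstoUniformlyOn (fun t x => h t x) id Filter.atTop K := by
    rw [Metric.tendstoUniformlyOn_iff]
    intro ε hε
    -- for each x ∈ K choose T_x ≥ 0 with ∀ i, |h T_x x i - x i| < ε/2
    have hT : ∀ x : Fin n → ℝ, ∃ T : ℝ, 0 ≤ T ∧ dist (h T x) x < ε / 2 := by
      intro x
      have : Tendsto (fun t => dist (h t x) x) atTop (nhds 0) := by
        have := tendsto_pi_nhds.2 (fun i => hh_vanish i x)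
        have := (this.dist (tendsto_const_nhds : Tendsto (fun _ : ℝ => x) atTop (nhds x)))
        simpa using this
      have := (this.eventually (gt_mem_nhds (by linarith : (0:ℝ) < ε / 2)))
      rcases (this.and (eventually_ge_atTop (0:ℝ))).exists with ⟨T, h1, h2⟩
      exact ⟨T, h2, h1⟩
    choose T hT0 hTd using hT
    -- open cover by U_x = {y | dist (h (T x) y) y < ε/2}
    have hcont : ∀ x : Fin n → ℝ, Continuous (fun y => h (T x) y) := by
      intro x
      have : ContinuousOn (fun y : Fin n → ℝ => h (T x) y) Set.univ := by
        have hmap : ∀ y : Fin n → ℝ, ((T x, y) : ℝ × (Fin n → ℝ)) ∈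
            Set.Ici (0:ℝ) ×ˢ Set.univ := fun y => ⟨hT0 x, mem_univ y⟩
        exact (hh_cont.comp (Continuous.continuousOn (by continuity))
          (fun y _ => hmap y))
      exact continuousOn_univ.1 this
    set U : (Fin n → ℝ) → Set (Fin n → ℝ) :=
      fun x => {y | dist (h (T x) y) y < ε / 2} with hU
    have hUopen : ∀ x, IsOpen (U x) := by
      intro x
      exact isOpen_lt (((hcont x).dist continuous_id)) continuous_const
    have hcover : ∀ x ∈ K, x ∈ U x := fun x _ => hTd x
    obtain ⟨s, hsK, hs⟩ := hK.elim_nhds_subcover U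
      (fun x hx => (hUopen x).mem_nhds (hcover x hx))
    -- take T* = max over s of T x
    by_cases hse : s.Nonempty
    · set Tm := s.sup' hse T with hTm
      filter_upwards [eventually_ge_atTop Tm] with t ht x hx
      obtain ⟨x₀, hx₀s, hx₀U⟩ := Set.mem_iUnion₂.1 (hs hx)
      have hTx₀ : T x₀ ≤ t := le_trans (Finset.le_sup' T hx₀s) ht
      have ht0 : (0:ℝ) ≤ t := le_trans (hT0 x₀) hTx₀
      -- componentwise antitone
      have hlt : dist x (h t x) < ε := by
        rcases Nat.eq_zero_or_pos n with hn | hn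
        · have : dist x (h t x) = 0 := by
            simp [dist_pi_def]
            subst hn
            simp [Finset.univ_eq_empty]
          rw [this]; exact hε
        rw [dist_pi_lt_iff hε]
        intro i
        have hmono := hh_mono i x (hT0 x₀) ht0 hTx₀
        have hcomp : dist (h (T x₀) x i) (x i) ≤ dist (h (T x₀) x) x :=
          dist_le_pi_dist _ _ i
        have hx₀d : dist (h (T x₀) x) x < ε / 2 := hx₀U
        have : |h t x i - x i| ≤ |h (T x₀) x i - x i| := hmono
        calc dist (x i) (h t x i) = |h t x i - x i| := by
              rw [dist_comm, Real.dist_eq]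
          _ ≤ |h (T x₀) x i - x i| := this
          _ = dist (h (T x₀) x i) (x i) := (Real.dist_eq _ _).symm
          _ ≤ dist (h (T x₀) x) x := hcomp
          _ < ε / 2 := hx₀d
          _ < ε := by linarith
      simpa using hlt
    · -- s empty ⇒ K empty
      have hKe : K ⊆ ∅ := by
        intro x hx
        rcases Set.mem_iUnion₂.1 (hs hx) with ⟨x₀, hx₀s, _⟩
        exact absurd ⟨x₀, hx₀s⟩ hse
      filter_upwards with t x hx
      exact absurd (hKe hx) (Set.notMem_empty x)
  have := hC.uniformContinuous.comp_tendstoUniformlyOn key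
  exact this
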